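/- arXiv:1512.06665 — 4 statements merged into one kernel-verified Lean document; each statement's English description precedes it below -/
import Mathlib

section
/- For all integers l ≥ 1 and all θ ∈ [0, π/2], one has 0 ≤ 1 - P_l(cos(θ/l)) ≤ C θ² for some constant C independent of l and θ, where P_l is the l-th Legendre polynomial. -/
set_option maxHeartbeats 1000000
open Real Polynomial Finset

/-- The l-th Legendre polynomial via the Rodrigues formula
`P_l(x) = (1/(2^l l!)) dˡ/dxˡ (x²-1)ˡ`. -/
noncomputable def legendreP (l : ℕ) (x : ℝ) : ℝ :=
  (1 / (2 ^ l * (l.factorial : ℝ))) * iteratedDeriv l (fun y : ℝ => (y ^ 2 - 1) ^ l) x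

lemma iteratedDeriv_polynomial (p : Polynomial ℝ) (n : ℕ) :
    iteratedDeriv n (fun y : ℝ => p.eval y) = fun y => (derivative^[n] p).eval y := by
  induction n generalizing p with
  | zero => simp
  | succ n ih =>
    rw [iteratedDeriv_succ']
    have h : (deriv fun y : ℝ => p.eval y) = fun y => (derivative p).eval y := by
      funext y; exact Polynomial.deriv (p := p)
    rw [h, ih, Function.iterate_succ_apply]

lemma legendre_sum (l : ℕ) (x : ℝ) :
    legendreP l x = ∑ k ∈ Finset.range (l+1),
      (l.choose k : ℝ)^2 * ((x-1)/2)^k * ((x+1)/2)^(l-k) := by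
  have hpoly : (fun y : ℝ => (y ^ 2 - 1) ^ l)
      = fun y => (((X - C 1) ^ l * (X - C (-1)) ^ l : Polynomial ℝ)).eval y := by
    funext y
    simp only [Polynomial.eval_mul, Polynomial.eval_pow, Polynomial.eval_sub,
      Polynomial.eval_X, Polynomial.eval_C]
    rw [← mul_pow]; congr 1; ring
  rw [legendreP, hpoly, iteratedDeriv_polynomial, Polynomial.iterate_derivative_mul]
  simp only [Polynomial.iterate_derivative_X_sub_pow, Polynomial.eval_finset_sum, smul_mul_assoc,
    Polynomial.eval_smul, Polynomial.eval_mul, Polynomial.eval_pow, Polynomial.eval_sub,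
    Polynomial.eval_X, Polynomial.eval_C, smul_eq_mul, nsmul_eq_mul]
  rw [Finset.mul_sum]
  refine Finset.sum_congr rfl fun k hk => ?_
  have hkl : k ≤ l := by simpa using Nat.lt_succ_iff.mp (Finset.mem_range.mp hk)
  have hsub : l - (l - k) = k := Nat.sub_sub_self hkl
  rw [hsub]
  have hnat : (l.choose k) * (l.descFactorial (l - k)) * (l.descFactorial k)
      = l.factorial * (l.choose k)^2 := by
    rw [Nat.descFactorial_eq_factorial_mul_choose, Nat.descFactorial_eq_factorial_mul_choose,
      Nat.choose_symm hkl]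
    rw [← Nat.choose_mul_factorial_mul_factorial hkl]; ring
  have hfac : (l.factorial : ℝ) ≠ 0 := Nat.cast_ne_zero.mpr l.factorial_ne_zero
  have h2 : (2:ℝ)^k * 2^(l-k) = 2^l := by rw [← pow_add, Nat.add_sub_cancel' hkl]
  have hcast : (l.choose k : ℝ) * (l.descFactorial (l - k)) * (l.descFactorial k)
      = (l.factorial : ℝ) * (l.choose k)^2 := by exact_mod_cast congrArg (Nat.cast (R := ℝ)) hnat
  simp only [Polynomial.eval_natCast, sub_neg_eq_add]
  rw [← h2, div_pow, div_pow]
  field_simp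
  linear_combination (x-1)^k * (x+1)^(l-k) * hcast

lemma facsq (m : ℕ) : 4 * 9^m ≤ ((2+m).factorial)^2 := by
  induction m with
  | zero => norm_num [Nat.factorial]
  | succ m ih =>
    have h : (2+(m+1)).factorial = (3+m) * (2+m).factorial := by
      rw [show 2+(m+1) = (2+m)+1 by ring, Nat.factorial_succ]
      ring
    rw [h]
    have h9 : 9 ≤ (3+m)^2 := by nlinarith [Nat.le_add_right 3 m]
    calc 4 * 9^(m+1) = 9 * (4 * 9^m) := by ring
      _ ≤ (3+m)^2 * ((2+m).factorial^2) := Nat.mul_le_mul h9 ih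
      _ = ((3+m) * (2+m).factorial)^2 := by ring

lemma geom8 (n : ℕ) : ∑ m ∈ Finset.range n, ((1:ℝ)/8)^m ≤ 8/7 := by
  rw [geom_sum_eq (by norm_num)]
  have h1 : (0:ℝ) ≤ (1/8)^n := by positivity
  rw [div_le_iff_of_neg (by norm_num)]
  linarith

/-- there is a constant `C > 0` such that for all `l ≥ 1` and
`θ ∈ [0, π/2]`, `0 ≤ 1 - P_l(cos(θ/l)) ≤ C θ²`. -/
theorem stmt_0 :
    ∃ C > (0 : ℝ), ∀ l : ℕ, 1 ≤ l → ∀ θ ∈ Set.Icc (0 : ℝ) (π / 2),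
      0 ≤ 1 - legendreP l (Real.cos (θ / l)) ∧
      1 - legendreP l (Real.cos (θ / l)) ≤ C * θ ^ 2 := by
  refine ⟨1, one_pos, fun l hl θ hθ => ?_⟩
  obtain ⟨hθ0, hθπ⟩ := hθ
  have hl1 : (1:ℝ) ≤ (l:ℝ) := by exact_mod_cast hl
  have hl0 : (0:ℝ) < l := by linarith
  set t : ℝ := θ / l with ht
  have ht0 : 0 ≤ t := div_nonneg hθ0 hl0.le
  have htθ : t ≤ θ := by
    rw [ht, div_le_iff₀ hl0]; nlinarith
  set s : ℝ := Real.sin (t/2) ^ 2 with hs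
  set c : ℝ := Real.cos (t/2) ^ 2 with hc
  have hs0 : 0 ≤ s := sq_nonneg _
  have hc0 : 0 ≤ c := sq_nonneg _
  have hcs : s + c = 1 := Real.sin_sq_add_cos_sq _
  have hc1 : c ≤ 1 := by linarith
  have hs1 : s ≤ 1 := by linarith
  have hsinle : Real.sin (t/2) ≤ t/2 := Real.sin_le (by linarith)
  have hsinpos : 0 ≤ Real.sin (t/2) := Real.sin_nonneg_of_nonneg_of_le_pi (by linarith)
    (by nlinarith [Real.pi_gt_three])
  have hst : s ≤ (t/2)^2 := by rw [hs]; exact pow_le_pow_left₀ hsinpos hsinle 2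
  set u : ℝ := (l:ℝ)^2 * s with hu
  have hu0 : 0 ≤ u := by positivity
  have huθ : u ≤ θ^2/4 := by
    have h4 : (l:ℝ)^2 * (t/2)^2 = θ^2/4 := by
      rw [ht]; field_simp; ring
    linarith [mul_le_mul_of_nonneg_left hst (by positivity : (0:ℝ) ≤ (l:ℝ)^2)]
  have hu58 : u ≤ 5/8 := by nlinarith [Real.pi_lt_d2]
  have hplus : (Real.cos t + 1)/2 = c := by
    have h2 := Real.cos_two_mul (t/2)
    rw [show 2*(t/2) = t by ring] at h2
    rw [h2, hc]; ring
  have hminus : (Real.cos t - 1)/2 = -s := by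
    have h2 := Real.cos_two_mul (t/2)
    rw [show 2*(t/2) = t by ring] at h2
    rw [h2]; linarith [hcs]
  set A : ℕ → ℝ := fun j => (l.choose j:ℝ)^2 * s^j * c^(l-j) with hA
  have hAdef : ∀ j, A j = (l.choose j:ℝ)^2 * s^j * c^(l-j) := fun j => rfl
  have hP : legendreP l (Real.cos t) = ∑ k ∈ Finset.range (l+1), (-1:ℝ)^k * A k := by
    rw [legendre_sum]
    refine Finset.sum_congr rfl fun k _ => ?_
    rw [hminus, hplus]
    show _ = (-1:ℝ)^k * ((l.choose k:ℝ)^2 * s^k * c^(l-k))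
    rw [neg_pow]; ring
  have hsplit := Finset.sum_range_add_sum_Ico (fun k => (-1:ℝ)^k * A k)
    (by omega : 2 ≤ l+1)
  have hr2 : ∑ k ∈ Finset.range 2, (-1:ℝ)^k * A k = c^l - u * c^(l-1) := by
    show ∑ k ∈ Finset.range 2, (-1:ℝ)^k * ((l.choose k:ℝ)^2 * s^k * c^(l-k)) = _
    rw [Finset.sum_range_succ, Finset.sum_range_one]
    simp only [Nat.choose_zero_right, Nat.choose_one_right, pow_zero, pow_one, Nat.sub_zero]
    rw [hu]; ring
  set E : ℝ := ∑ j ∈ Finset.Ico 2 (l+1), (-1:ℝ)^j * A j with hE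
  have hPE : legendreP l (Real.cos t) = c^l - u * c^(l-1) + E := by
    rw [hP, ← hsplit, hr2]
  clear_value s c u A E
  have hAnn : ∀ j, 0 ≤ A j := fun j => by
    rw [hAdef]; positivity
  have hAle : ∀ m : ℕ, A (2+m) ≤ (u^2/4) * (1/8)^m := by
    intro m
    set j := 2 + m with hj
    have hfj : (0:ℝ) < (j.factorial : ℝ) := by exact_mod_cast j.factorial_pos
    have hch : (l.choose j : ℝ) * (j.factorial) ≤ (l:ℝ)^j := by
      have h1 := Nat.descFactorial_le_pow l j
      rw [Nat.descFactorial_eq_factorial_mul_choose] at h1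
      have h2 : ((j.factorial * l.choose j : ℕ) : ℝ) ≤ ((l^j : ℕ) : ℝ) := Nat.cast_le.mpr h1
      push_cast at h2
      linarith
    have hcle : (l.choose j:ℝ) ≤ (l:ℝ)^j / (j.factorial:ℝ) := by
      rw [le_div_iff₀ hfj]; exact hch
    have hstep1 : A j ≤ (l.choose j:ℝ)^2 * s^j := by
      rw [hAdef]
      exact mul_le_of_le_one_right
        (mul_nonneg (sq_nonneg ((l.choose j:ℝ))) (pow_nonneg hs0 j)) (pow_le_one₀ hc0 hc1)
    have hstep2 : (l.choose j:ℝ)^2 * s^j ≤ u^j / (j.factorial:ℝ)^2 := by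
      have h1 : (l.choose j:ℝ)^2 ≤ ((l:ℝ)^j / (j.factorial:ℝ))^2 :=
        pow_le_pow_left₀ (Nat.cast_nonneg _) hcle 2
      have h2 : ((l:ℝ)^j / (j.factorial:ℝ))^2 * s^j = u^j / (j.factorial:ℝ)^2 := by
        rw [hu, div_pow, mul_pow, ← pow_mul, ← pow_mul, Nat.mul_comm j 2]
        ring
      calc (l.choose j:ℝ)^2 * s^j ≤ ((l:ℝ)^j / (j.factorial:ℝ))^2 * s^j :=
            mul_le_mul_of_nonneg_right h1 (pow_nonneg hs0 j)
        _ = u^j / (j.factorial:ℝ)^2 := h2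
    have hfacsq : (4:ℝ) * 9^m ≤ ((j.factorial:ℝ))^2 := by
      exact_mod_cast facsq m
    have hstep3 : u^j / (j.factorial:ℝ)^2 ≤ (u^2 * u^m) / (4 * 9^m) := by
      rw [hj, pow_add]
      gcongr
    have hstep4 : (u^2 * u^m) / (4 * 9^m) = (u^2/4) * (u/9)^m := by
      rw [div_pow]; ring
    have hstep5 : (u/9)^m ≤ (1/8:ℝ)^m :=
      pow_le_pow_left₀ (by positivity) (by linarith) m
    calc A j ≤ (l.choose j:ℝ)^2 * s^j := hstep1
      _ ≤ u^j / (j.factorial:ℝ)^2 := hstep2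
      _ ≤ (u^2 * u^m) / (4 * 9^m) := hstep3
      _ = (u^2/4) * (u/9)^m := hstep4
      _ ≤ (u^2/4) * (1/8)^m := by
          exact mul_le_mul_of_nonneg_left hstep5 (by positivity)
  have hT : ∑ j ∈ Finset.Ico 2 (l+1), A j ≤ (u^2/4) * (8/7) := by
    rw [Finset.sum_Ico_eq_sum_range]
    calc ∑ m ∈ Finset.range (l+1-2), A (2+m)
        ≤ ∑ m ∈ Finset.range (l+1-2), (u^2/4) * (1/8)^m :=
          Finset.sum_le_sum fun m _ => hAle m
      _ = (u^2/4) * ∑ m ∈ Finset.range (l+1-2), (1/8:ℝ)^m := by rw [Finset.mul_sum]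
      _ ≤ (u^2/4) * (8/7) := mul_le_mul_of_nonneg_left (geom8 _) (by positivity)
  have hEbd : |E| ≤ (u^2/4) * (8/7) := by
    rw [hE]
    refine le_trans (Finset.abs_sum_le_sum_abs _ _) (le_trans (le_of_eq ?_) hT)
    refine Finset.sum_congr rfl fun j _ => ?_
    rw [abs_mul, abs_pow, abs_neg, abs_one, one_pow, one_mul, abs_of_nonneg (hAnn j)]
  have hcB : (1:ℝ) + -s = c := by linarith
  have hBl : 1 - (l:ℝ)*s ≤ c^l := by
    have h := one_add_mul_le_pow (a := -s) (by linarith) l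
    rw [hcB] at h
    linarith [h]
  have hBl1 : 1 - u ≤ c^(l-1) := by
    have h := one_add_mul_le_pow (a := -s) (by linarith) (l-1)
    rw [hcB] at h
    have h1 : ((l-1:ℕ):ℝ) ≤ (l:ℝ)^2 := by
      have h2 : ((l-1:ℕ):ℝ) ≤ (l:ℝ) := by exact_mod_cast Nat.cast_le.mpr (Nat.sub_le l 1)
      linarith [sq_nonneg ((l:ℝ)-1)]
    have h3 : ((l-1:ℕ):ℝ) * s ≤ u := by
      rw [hu]; exact mul_le_mul_of_nonneg_right h1 hs0
    linarith [h]
  have hclle1 : c^l ≤ 1 := pow_le_one₀ hc0 hc1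
  have hcl1le1 : c^(l-1) ≤ 1 := pow_le_one₀ hc0 hc1
  have h1cl : 1 - c^l ≤ u := by
    have hll : (l:ℝ) ≤ (l:ℝ)^2 := by linarith [sq_nonneg ((l:ℝ)-1)]
    have : (l:ℝ)*s ≤ (l:ℝ)^2*s := mul_le_mul_of_nonneg_right hll hs0
    rw [hu]; linarith
  have hucl : u * (1-u) ≤ u * c^(l-1) := mul_le_mul_of_nonneg_left hBl1 hu0
  have huclu : u * c^(l-1) ≤ u := by
    calc u * c^(l-1) ≤ u * 1 := mul_le_mul_of_nonneg_left hcl1le1 hu0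
      _ = u := mul_one u
  have hucl' : u - u^2 ≤ u * c^(l-1) := by
    calc u - u^2 = u*(1-u) := by ring
      _ ≤ u*c^(l-1) := mul_le_mul_of_nonneg_left hBl1 hu0
  have hsq : u^2 ≤ (5/8)*u := by
    calc u^2 = u*u := sq u
      _ ≤ u*(5/8) := mul_le_mul_of_nonneg_left hu58 hu0
      _ = (5/8)*u := mul_comm _ _
  have hEle : E ≤ (u^2/4)*(8/7) := le_trans (le_abs_self E) hEbd
  have hEge : -E ≤ (u^2/4)*(8/7) := by
    refine le_trans ?_ hEbd
    rw [← abs_neg]; exact le_abs_self (-E)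
  constructor
  · rw [hPE]
    linarith [hclle1, hucl', hsq, hEle, hu0]
  · rw [hPE]
    linarith [h1cl, huclu, hEge, hsq, huθ, hu0]
end

section
/- Let s > 0. Then ∫_{log√2}^{log√N} z^{2/s - 1}·(1 - (1 - e^{-2z})^{N/2}) dz is asymptotically equivalent to (s/2)·(log√N)^{2/s} as N → ∞; more precisely, the ratio of the integral to (s/2)(log√N)^{2/s} tends to 1. -/
open Real Filter intervalIntegral

private lemma stmt6_contOn {r p : ℝ} (hp : 0 ≤ p) {a b : ℝ} (ha : 0 < a) :
    ContinuousOn (fun z : ℝ => z ^ r * (1 - (1 - Real.exp (-2 * z)) ^ p)) (Set.Icc a b) := by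
  intro z hz
  have hz0 : 0 < z := lt_of_lt_of_le ha hz.1
  apply ContinuousAt.continuousWithinAt
  refine ContinuousAt.mul (Real.continuousAt_rpow_const _ _ (Or.inl hz0.ne')) ?_
  refine continuousAt_const.sub ?_
  exact ((continuous_const.sub (Real.continuous_exp.comp (by fun_prop))).continuousAt).rpow_const
    (Or.inr hp)

private lemma stmt6_rpow_int (s : ℝ) (hs : 0 < s) (a b : ℝ) :
    ∫ z in a..b, z ^ (2/s - 1) = s/2 * (b ^ (2/s) - a ^ (2/s)) := by
  have h2s : 0 < 2/s := by positivity
  rw [integral_rpow (Or.inl (by linarith)), show 2/s - 1 + 1 = 2/s by ring]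
  field_simp

private lemma stmt6_key (s : ℝ) (hs : 0 < s) :
    Filter.Tendsto (fun b : ℝ =>
      (∫ z in Real.log (Real.sqrt 2)..b,
          z ^ (2 / s - 1) * (1 - (1 - Real.exp (-2 * z)) ^ (Real.exp (2 * b) / 2)))
        / (s / 2 * b ^ (2 / s))) atTop (nhds 1) := by
  set a : ℝ := Real.log (Real.sqrt 2) with ha_def
  have ha : 0 < a := by
    apply Real.log_pos
    rw [show (1:ℝ) = Real.sqrt 1 by simp]
    exact Real.sqrt_lt_sqrt (by norm_num) (by norm_num)
  have ha1 : a < 1 := by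
    rw [ha_def, Real.log_sqrt (by norm_num)]
    have := Real.log_le_sub_one_of_pos (show (0:ℝ) < 2 by norm_num)
    linarith
  have h2s : 0 < 2/s := by positivity
  -- lower and upper comparison functions
  set L : ℝ → ℝ := fun b =>
    (1 - Real.exp (-(b^2/2))) * (s/2 * ((b - Real.log b) ^ (2/s) - a ^ (2/s)))
      / (s / 2 * b ^ (2 / s)) with hL_def
  set U : ℝ → ℝ := fun b => (s/2 * (b ^ (2/s) - a ^ (2/s))) / (s / 2 * b ^ (2 / s)) with hU_def
  have hLlim : Tendsto L atTop (nhds 1) := by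
    have h1 : Tendsto (fun b : ℝ => 1 - Real.exp (-(b^2/2))) atTop (nhds 1) := by
      have hsq : Tendsto (fun b : ℝ => b^2/2) atTop atTop :=
        (tendsto_pow_atTop two_ne_zero).atTop_div_const (by norm_num)
      have : Tendsto (fun b : ℝ => -(b^2/2)) atTop atBot := tendsto_neg_atTop_atBot.comp hsq
      have := (Real.tendsto_exp_atBot).comp this
      simpa using tendsto_const_nhds.sub this
    have h2 : Tendsto (fun b : ℝ => ((b - Real.log b) / b) ^ (2/s)) atTop (nhds 1) := by
      have hlb : Tendsto (fun b : ℝ => Real.log b / b) atTop (nhds 0) := by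
        simpa [Function.comp] using Real.isLittleO_log_id_atTop.tendsto_div_nhds_zero
      have : Tendsto (fun b : ℝ => 1 - Real.log b / b) atTop (nhds 1) := by
        simpa using tendsto_const_nhds.sub hlb
      have h' : Tendsto (fun b : ℝ => (1 - Real.log b / b) ^ (2/s)) atTop (nhds (1 ^ (2/s))) :=
        this.rpow_const (Or.inl one_ne_zero)
      rw [Real.one_rpow] at h'
      apply h'.congr'
      filter_upwards [eventually_gt_atTop (0:ℝ)] with b hb
      rw [sub_div, div_self hb.ne']
    have h3 : Tendsto (fun b : ℝ => a ^ (2/s) / b ^ (2/s)) atTop (nhds 0) :=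
      tendsto_const_nhds.div_atTop (tendsto_rpow_atTop h2s)
    have hcomb : Tendsto
        (fun b : ℝ => (1 - Real.exp (-(b^2/2))) * (((b - Real.log b)/b) ^ (2/s) - a ^ (2/s) / b ^ (2/s)))
        atTop (nhds 1) := by
      have := h1.mul (h2.sub h3)
      simpa using this
    apply hcomb.congr'
    filter_upwards [eventually_ge_atTop (4:ℝ)] with b hb
    have hb0 : (0:ℝ) < b := by linarith
    have hlogb : Real.log b ≤ b := (Real.log_le_sub_one_of_pos hb0).trans (by linarith)
    have hc0 : 0 ≤ b - Real.log b := by linarith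
    have hbpow : (0:ℝ) < b ^ (2/s) := Real.rpow_pos_of_pos hb0 _
    rw [hL_def]
    rw [Real.div_rpow hc0 hb0.le]
    field_simp
  have hUlim : Tendsto U atTop (nhds 1) := by
    have h3 : Tendsto (fun b : ℝ => a ^ (2/s) / b ^ (2/s)) atTop (nhds 0) :=
      tendsto_const_nhds.div_atTop (tendsto_rpow_atTop h2s)
    have : Tendsto (fun b : ℝ => 1 - a ^ (2/s) / b ^ (2/s)) atTop (nhds 1) := by
      simpa using tendsto_const_nhds.sub h3
    apply this.congr'
    filter_upwards [eventually_gt_atTop (0:ℝ)] with b hb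
    have hbpow : (0:ℝ) < b ^ (2/s) := Real.rpow_pos_of_pos hb _
    rw [hU_def]
    field_simp
  refine tendsto_of_tendsto_of_tendsto_of_le_of_le' hLlim hUlim ?_ ?_
  · -- L ≤ F eventually
    filter_upwards [eventually_ge_atTop (4:ℝ)] with b hb
    have hb0 : (0:ℝ) < b := by linarith
    have hp : (0:ℝ) ≤ Real.exp (2*b) / 2 := by positivity
    set p : ℝ := Real.exp (2*b) / 2 with hp_def
    set c : ℝ := b - Real.log b with hc_def
    -- log b ≤ b/2
    have hsq : Real.sqrt b ^ 2 = b := Real.sq_sqrt hb0.le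
    have hsq0 : 0 < Real.sqrt b := Real.sqrt_pos.mpr hb0
    have hlog_half : Real.log b ≤ b/2 := by
      have h1 : Real.log (Real.sqrt b) ≤ Real.sqrt b - 1 := Real.log_le_sub_one_of_pos hsq0
      have h2 : Real.log b = 2 * Real.log (Real.sqrt b) := by
        rw [Real.log_sqrt hb0.le]; ring
      nlinarith [sq_nonneg (Real.sqrt b - 2)]
    have hlog0 : 0 ≤ Real.log b := Real.log_nonneg (by linarith)
    have hac : a ≤ c := by simp only [hc_def]; linarith
    have hcb : c ≤ b := by simp only [hc_def]; linarith
    have hc0 : 0 < c := lt_of_lt_of_le ha hac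
    set ε : ℝ := Real.exp (-(b^2/2)) with hε_def
    -- key pointwise estimate: for z ∈ [a,c], (1 - exp(-2z))^p ≤ ε
    have hqε : ∀ z ∈ Set.Icc a c, (1 - Real.exp (-2*z)) ^ p ≤ ε := by
      intro z hz
      have hz0 : 0 < z := lt_of_lt_of_le ha hz.1
      have hw1 : Real.exp (-2*z) ≤ 1 := Real.exp_le_one_iff.mpr (by linarith)
      have hwc : Real.exp (-2*c) ≤ Real.exp (-2*z) := Real.exp_le_exp.mpr (by linarith [hz.2])
      have step1 : (1 - Real.exp (-2*z)) ^ p ≤ (1 - Real.exp (-2*c)) ^ p :=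
        Real.rpow_le_rpow (by linarith) (by linarith) hp
      have step2 : (1 - Real.exp (-2*c)) ^ p ≤ (Real.exp (-Real.exp (-2*c))) ^ p :=
        Real.rpow_le_rpow (by linarith [Real.exp_le_one_iff.mpr (show -2*c ≤ 0 by linarith)])
          (by linarith [Real.add_one_le_exp (-Real.exp (-2*c))]) hp
      have step3 : (Real.exp (-Real.exp (-2*c))) ^ p = Real.exp (-Real.exp (-2*c) * p) :=
        (Real.exp_mul _ _).symm
      have step4 : -Real.exp (-2*c) * p = -(b^2/2) := by
        have : Real.exp (-2*c) * Real.exp (2*b) = b^2 := by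
          rw [← Real.exp_add, show -2*c + 2*b = 2 * Real.log b by rw [hc_def]; ring]
          rw [show (2:ℝ) * Real.log b = Real.log (b^2) by
            rw [Real.log_pow]; norm_num]
          exact Real.exp_log (by positivity)
        have h5 : Real.exp (-2*c) * (Real.exp (2*b)/2) = b^2/2 := by
          rw [← mul_div_assoc, this]
        rw [hp_def, neg_mul, h5]
      calc (1 - Real.exp (-2*z)) ^ p ≤ (Real.exp (-Real.exp (-2*c))) ^ p := step1.trans step2
        _ = ε := by rw [step3, step4]
    -- integrability
    have hintf_ac : IntervalIntegrable
        (fun z : ℝ => z ^ (2/s - 1) * (1 - (1 - Real.exp (-2 * z)) ^ p)) MeasureTheory.volume a c :=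
      (Set.uIcc_of_le hac ▸ stmt6_contOn hp ha).intervalIntegrable
    have hintf_cb : IntervalIntegrable
        (fun z : ℝ => z ^ (2/s - 1) * (1 - (1 - Real.exp (-2 * z)) ^ p)) MeasureTheory.volume c b :=
      (Set.uIcc_of_le hcb ▸ stmt6_contOn hp hc0).intervalIntegrable
    have hintr_ac : IntervalIntegrable (fun z : ℝ => (1-ε) * z ^ (2/s - 1))
        MeasureTheory.volume a c := by
      apply IntervalIntegrable.const_mul
      apply intervalIntegral.intervalIntegrable_rpow
      right
      rw [Set.uIcc_of_le hac]
      intro h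
      exact absurd h.1 (by linarith)
    -- nonnegativity of the integrand everywhere on [a, b]
    have hf_nonneg : ∀ z ∈ Set.Icc c b,
        0 ≤ z ^ (2/s - 1) * (1 - (1 - Real.exp (-2 * z)) ^ p) := by
      intro z hz
      have hz0 : 0 < z := lt_of_lt_of_le hc0 hz.1
      have hw1 : Real.exp (-2*z) ≤ 1 := Real.exp_le_one_iff.mpr (by linarith)
      have hq1 : (1 - Real.exp (-2*z)) ^ p ≤ 1 :=
        Real.rpow_le_one (by linarith) (by linarith [Real.exp_pos (-2*z)]) hp
      have := Real.rpow_nonneg hz0.le (2/s - 1)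
      nlinarith
    -- split the integral
    have hsplit : (∫ z in a..c, z ^ (2/s - 1) * (1 - (1 - Real.exp (-2 * z)) ^ p))
          + (∫ z in c..b, z ^ (2/s - 1) * (1 - (1 - Real.exp (-2 * z)) ^ p))
        = ∫ z in a..b, z ^ (2/s - 1) * (1 - (1 - Real.exp (-2 * z)) ^ p) :=
      intervalIntegral.integral_add_adjacent_intervals hintf_ac hintf_cb
    have h_cb_nonneg : 0 ≤ ∫ z in c..b, z ^ (2/s - 1) * (1 - (1 - Real.exp (-2 * z)) ^ p) :=
      intervalIntegral.integral_nonneg hcb (fun z hz => hf_nonneg z hz)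
    have h_ac_mono : (∫ z in a..c, (1-ε) * z ^ (2/s - 1))
        ≤ ∫ z in a..c, z ^ (2/s - 1) * (1 - (1 - Real.exp (-2 * z)) ^ p) := by
      apply intervalIntegral.integral_mono_on hac hintr_ac hintf_ac
      intro z hz
      have hz0 : 0 < z := lt_of_lt_of_le ha hz.1
      have hzr : 0 ≤ z ^ (2/s - 1) := Real.rpow_nonneg hz0.le _
      have hq : (1 - Real.exp (-2*z)) ^ p ≤ ε := hqε z hz
      nlinarith
    have h_ac_val : (∫ z in a..c, (1-ε) * z ^ (2/s - 1))
        = (1-ε) * (s/2 * (c ^ (2/s) - a ^ (2/s))) := by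
      rw [intervalIntegral.integral_const_mul, stmt6_rpow_int s hs]
    -- conclude
    have hden : (0:ℝ) < s/2 * b ^ (2/s) := by
      have := Real.rpow_pos_of_pos hb0 (2/s)
      positivity
    simp only [hL_def]
    rw [div_le_div_iff_of_pos_right hden]
    calc (1 - Real.exp (-(b^2/2))) * (s/2 * ((b - Real.log b) ^ (2/s) - a ^ (2/s)))
        = ∫ z in a..c, (1-ε) * z ^ (2/s - 1) := by rw [h_ac_val]
      _ ≤ ∫ z in a..c, z ^ (2/s - 1) * (1 - (1 - Real.exp (-2 * z)) ^ p) := h_ac_mono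
      _ ≤ ∫ z in a..b, z ^ (2/s - 1) * (1 - (1 - Real.exp (-2 * z)) ^ p) := by linarith
  · -- F ≤ U eventually
    filter_upwards [eventually_ge_atTop (4:ℝ)] with b hb
    have hb0 : (0:ℝ) < b := by linarith
    have hp : (0:ℝ) ≤ Real.exp (2*b) / 2 := by positivity
    have hab : a ≤ b := by linarith
    have hintf : IntervalIntegrable
        (fun z : ℝ => z ^ (2/s - 1) * (1 - (1 - Real.exp (-2 * z)) ^ (Real.exp (2*b)/2)))
        MeasureTheory.volume a b :=
      (Set.uIcc_of_le hab ▸ stmt6_contOn hp ha).intervalIntegrable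
    have hintr : IntervalIntegrable (fun z : ℝ => z ^ (2/s - 1)) MeasureTheory.volume a b := by
      apply intervalIntegral.intervalIntegrable_rpow
      right
      rw [Set.uIcc_of_le hab]
      intro h
      exact absurd h.1 (by linarith)
    have hmono : (∫ z in a..b, z ^ (2/s - 1) * (1 - (1 - Real.exp (-2 * z)) ^ (Real.exp (2*b)/2)))
        ≤ ∫ z in a..b, z ^ (2/s - 1) := by
      apply intervalIntegral.integral_mono_on hab hintf hintr
      intro z hz
      have hz0 : 0 < z := lt_of_lt_of_le ha hz.1
      have hzr : 0 ≤ z ^ (2/s - 1) := Real.rpow_nonneg hz0.le _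
      have hq : 0 ≤ (1 - Real.exp (-2*z)) ^ (Real.exp (2*b)/2) :=
        Real.rpow_nonneg (by linarith [Real.exp_le_one_iff.mpr (show -2*z ≤ 0 by linarith)]) _
      nlinarith
    have hden : (0:ℝ) < s/2 * b ^ (2/s) := by
      have := Real.rpow_pos_of_pos hb0 (2/s)
      positivity
    simp only [hU_def]
    rw [← stmt6_rpow_int s hs a b, div_le_div_iff_of_pos_right hden]
    exact hmono


/-- ∫_{log√2}^{log√N} z^{2/s-1}(1-(1-e^{-2z})^{N/2}) dz ~ (s/2)(log√N)^{2/s} as N → ∞. -/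
theorem stmt_6 (s : ℝ) (hs : 0 < s) :
    Filter.Tendsto
      (fun N : ℕ =>
        (∫ z in Real.log (Real.sqrt 2)..Real.log (Real.sqrt N),
            z ^ (2 / s - 1) * (1 - (1 - Real.exp (-2 * z)) ^ ((N : ℝ) / 2)))
          / (s / 2 * (Real.log (Real.sqrt N)) ^ (2 / s)))
      Filter.atTop (nhds 1) := by
  have hb : Tendsto (fun N : ℕ => Real.log (Real.sqrt N)) atTop atTop := by
    have : Tendsto (fun N : ℕ => Real.log N / 2) atTop atTop :=
      (Real.tendsto_log_atTop.comp tendsto_natCast_atTop_atTop).atTop_div_const (by norm_num)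
    apply this.congr
    intro N
    rw [Real.log_sqrt (Nat.cast_nonneg N)]
  have := (stmt6_key s hs).comp hb
  apply this.congr'
  filter_upwards [eventually_ge_atTop 1] with N hN
  have hN0 : (0:ℝ) < N := by exact_mod_cast hN
  have : Real.exp (2 * Real.log (Real.sqrt N)) = N := by
    rw [Real.log_sqrt hN0.le, mul_div_cancel₀ _ (two_ne_zero), Real.exp_log hN0]
  simp only [Function.comp, this]
end

section
/- Let s > 0 and let λ_{n,l} be as in the spectral formula for the linearized Boltzmann operator with angular kernel β supported in [0, π/4] and β nonnegative with ∫₀^{π/4} β(θ) θ² dθ > 0. Then λ_{n,l} = 0 if n + l ≤ 1, and λ_{n,l} > 0 if n + l ≥ 2. -/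
open Real MeasureTheory
open Polynomial NNReal

lemma iteratedDeriv_polyeval {𝕜 : Type*} [NontriviallyNormedField 𝕜] (p : 𝕜[X]) (n : ℕ) :
    iteratedDeriv n (fun x => p.eval x) = fun x => (derivative^[n] p).eval x := by
  induction n with
  | zero => simp
  | succ n ih =>
    rw [iteratedDeriv_succ, ih]
    funext x
    rw [Function.iterate_succ_apply']
    exact Polynomial.deriv _

lemma legendreP_eq_poly (l : ℕ) (x : ℝ) :
    legendreP l x = (1 / (2 ^ l * (l.factorial : ℝ))) *
      (derivative^[l] (((X : ℝ[X]) ^ 2 - 1) ^ l)).eval x := by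
  unfold legendreP
  congr 1
  have : (fun y : ℝ => (y ^ 2 - 1) ^ l) = fun y : ℝ => (((X : ℝ[X]) ^ 2 - 1) ^ l).eval y := by
    funext y; simp
  rw [this, iteratedDeriv_polyeval]

lemma legendreP_zero (x : ℝ) : legendreP 0 x = 1 := by
  simp [legendreP_eq_poly]

lemma legendreP_one (x : ℝ) : legendreP 1 x = x := by
  have h : ((X : ℝ[X]) ^ 2 - 1) ^ 1 = X ^ 2 - 1 := pow_one _
  rw [legendreP_eq_poly, Function.iterate_one, h]
  simp [Nat.factorial]
  ring

lemma legendreP_two (x : ℝ) : legendreP 2 x = (3 * x ^ 2 - 1) / 2 := by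
  have h : ((X : ℝ[X]) ^ 2 - 1) ^ 2 = X ^ 4 - C 2 * X ^ 2 + 1 := by
    simp only [map_ofNat]; ring
  rw [legendreP_eq_poly, h]
  simp [Function.iterate_succ, derivative_X_pow, Nat.factorial]
  ring

lemma circle_bound {x r : ℝ} (hxr : x ^ 2 + r ^ 2 = 1) (hr : 0 ≤ r) (θ : ℝ) :
    ‖(circleMap (x : ℂ) r θ) ^ 2 - 1‖ ≤ 2 * r := by
  set z := circleMap (x : ℂ) r θ with hz
  have hre : z.re = x + r * Real.cos θ := by
    simp [hz, circleMap, Complex.exp_ofReal_mul_I_re]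
  have him : z.im = r * Real.sin θ := by
    simp [hz, circleMap, Complex.exp_ofReal_mul_I_im]
  have h2 : ‖z ^ 2 - 1‖ ^ 2 = (z.re ^ 2 - z.im ^ 2 - 1) ^ 2 + (2 * z.re * z.im) ^ 2 := by
    rw [Complex.sq_norm, Complex.normSq_apply]
    simp [pow_two, Complex.mul_re, Complex.mul_im]
    ring
  have hsc := Real.sin_sq_add_cos_sq θ
  have key : ‖z ^ 2 - 1‖ ^ 2 ≤ (2 * r) ^ 2 := by
    rw [h2, hre, him]
    have hid : ((x + r * Real.cos θ) ^ 2 - (r * Real.sin θ) ^ 2 - 1) ^ 2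
        + (2 * (x + r * Real.cos θ) * (r * Real.sin θ)) ^ 2
        = (2 * r) ^ 2 - 4 * r ^ 4 * Real.cos θ ^ 2 := by
      linear_combination (4 * r ^ 2 * Real.cos θ ^ 2 + 4 * x * r * Real.cos θ
          + (x ^ 2 + r ^ 2 - 1) + r ^ 2 * (Real.sin θ ^ 2 + Real.cos θ ^ 2 - 1)) * hxr
        + (4 * r ^ 2 + r ^ 2 * (4 * x * r * Real.cos θ + (x ^ 2 + r ^ 2 - 1)
          + r ^ 2 * (Real.sin θ ^ 2 + Real.cos θ ^ 2 - 1))) * hsc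
    nlinarith [sq_nonneg (r ^ 2 * Real.cos θ)]
  nlinarith [norm_nonneg (z ^ 2 - 1)]

lemma norm_iteratedDeriv_complex_le {x : ℝ} (hx : x ^ 2 < 1) (l : ℕ) :
    ‖iteratedDeriv l (fun z : ℂ => (z ^ 2 - 1) ^ l) (x : ℂ)‖
      ≤ (l.factorial : ℝ) * 2 ^ l := by
  set g : ℂ → ℂ := fun z => (z ^ 2 - 1) ^ l with hgdef
  set r : ℝ := Real.sqrt (1 - x ^ 2) with hrdef
  have hr : 0 < r := Real.sqrt_pos.mpr (by linarith)
  have hxr : x ^ 2 + r ^ 2 = 1 := by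
    rw [hrdef, Real.sq_sqrt (by linarith)]; ring
  set R : ℝ≥0 := ⟨r, hr.le⟩ with hRdef
  have hRr : (R : ℝ) = r := rfl
  have hg : Differentiable ℂ g := ((differentiable_pow 2).sub_const 1).pow l
  have h := hg.differentiableOn.hasFPowerSeriesOnBall (R := R) (c := (x : ℂ))
    (by exact_mod_cast hr)
  set p := cauchyPowerSeries g (x : ℂ) R with hpdef
  have hfs := h.factorial_smul (y := (1 : ℂ)) l
  rw [iteratedDeriv_eq_iteratedFDeriv, ← hfs]
  have hnorm1 : ‖l.factorial • (p l fun _ => (1 : ℂ))‖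
      = (l.factorial : ℝ) * ‖p l fun _ => (1 : ℂ)‖ := by
    rw [nsmul_eq_mul, norm_mul]
    simp
  rw [hnorm1]
  have hle1 : ‖p l fun _ => (1 : ℂ)‖ ≤ ‖p l‖ := by
    have := (p l).le_opNorm fun _ => (1 : ℂ)
    simpa using this
  have hle2 : ‖p l‖ ≤ ((2 * π)⁻¹ * ∫ θ : ℝ in (0)..2 * π, ‖g (circleMap x R θ)‖) * |(R : ℝ)|⁻¹ ^ l :=
    norm_cauchyPowerSeries_le g (x : ℂ) R l
  have hint : (∫ θ : ℝ in (0)..2 * π, ‖g (circleMap x R θ)‖) ≤ 2 * π * (2 * r) ^ l := by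
    have hptw : ∀ θ ∈ Set.Icc (0 : ℝ) (2 * π), ‖g (circleMap x R θ)‖ ≤ (2 * r) ^ l := by
      intro θ _
      rw [hgdef]
      simp only [norm_pow]
      exact pow_le_pow_left₀ (norm_nonneg _) (circle_bound hxr hr.le θ) l
    calc (∫ θ : ℝ in (0)..2 * π, ‖g (circleMap x R θ)‖)
        ≤ ∫ _ : ℝ in (0)..2 * π, (2 * r) ^ l := by
          apply intervalIntegral.integral_mono_on Real.two_pi_pos.le
          · exact ((hg.continuous.comp (continuous_circleMap _ _)).norm).intervalIntegrable _ _
          · exact intervalIntegrable_const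
          · exact hptw
      _ = 2 * π * (2 * r) ^ l := by
          rw [intervalIntegral.integral_const, smul_eq_mul]
          ring
  have hIpos : (0:ℝ) < 2 * π := Real.two_pi_pos
  calc (l.factorial : ℝ) * ‖p l fun _ => (1 : ℂ)‖
      ≤ (l.factorial : ℝ) * (((2 * π)⁻¹ * (2 * π * (2 * r) ^ l)) * |(R : ℝ)|⁻¹ ^ l) := by
        apply mul_le_mul_of_nonneg_left _ (by positivity)
        refine hle1.trans (hle2.trans ?_)
        apply mul_le_mul_of_nonneg_right _ (by positivity)
        exact mul_le_mul_of_nonneg_left hint (by positivity)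
    _ = (l.factorial : ℝ) * 2 ^ l := by
        rw [hRr, abs_of_pos hr]
        field_simp
        ring_nf; rw [← mul_pow, mul_inv_cancel₀ hr.ne', one_pow, one_mul]

lemma derivative_iterate_map (p : ℝ[X]) (n : ℕ) :
    derivative^[n] (p.map (algebraMap ℝ ℂ)) = (derivative^[n] p).map (algebraMap ℝ ℂ) := by
  induction n with
  | zero => simp
  | succ n ih => rw [Function.iterate_succ_apply', ih, Function.iterate_succ_apply',
      Polynomial.derivative_map]

lemma iteratedDeriv_real_complex (l : ℕ) (x : ℝ) :
    |iteratedDeriv l (fun y : ℝ => (y ^ 2 - 1) ^ l) x|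
      = ‖iteratedDeriv l (fun z : ℂ => (z ^ 2 - 1) ^ l) (x : ℂ)‖ := by
  have hr : iteratedDeriv l (fun y : ℝ => (y ^ 2 - 1) ^ l) x
      = (derivative^[l] (((X : ℝ[X]) ^ 2 - 1) ^ l)).eval x := by
    have : (fun y : ℝ => (y ^ 2 - 1) ^ l) = fun y : ℝ => ((((X : ℝ[X]) ^ 2 - 1) ^ l)).eval y := by
      funext y; simp
    rw [this, iteratedDeriv_polyeval]
  have hmap : (((X : ℂ[X]) ^ 2 - 1) ^ l) = (((X : ℝ[X]) ^ 2 - 1) ^ l).map (algebraMap ℝ ℂ) := by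
    simp [Polynomial.map_pow]
  have hc : iteratedDeriv l (fun z : ℂ => (z ^ 2 - 1) ^ l) (x : ℂ)
      = Complex.ofReal ((derivative^[l] (((X : ℝ[X]) ^ 2 - 1) ^ l)).eval x) := by
    have : (fun z : ℂ => (z ^ 2 - 1) ^ l) = fun z : ℂ => ((((X : ℂ[X]) ^ 2 - 1) ^ l)).eval z := by
      funext z; simp
    rw [this, iteratedDeriv_polyeval, hmap, derivative_iterate_map]
    simp only [Polynomial.eval_map]
    rw [show ((x : ℂ)) = algebraMap ℝ ℂ x from rfl, Polynomial.eval₂_at_apply]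
    rfl
  rw [hr, hc]
  simp

lemma abs_legendreP_le_one {x : ℝ} (hx : x ^ 2 < 1) (l : ℕ) : |legendreP l x| ≤ 1 := by
  have h := norm_iteratedDeriv_complex_le hx l
  rw [← iteratedDeriv_real_complex] at h
  have hfac : (0:ℝ) < 2 ^ l * (l.factorial : ℝ) := by positivity
  unfold legendreP
  rw [abs_mul, abs_of_pos (by positivity : (0:ℝ) < 1 / (2 ^ l * (l.factorial : ℝ)))]
  rw [div_mul_eq_mul_div, one_mul, div_le_one hfac]
  calc |iteratedDeriv l (fun y : ℝ => (y ^ 2 - 1) ^ l) x| ≤ (l.factorial : ℝ) * 2 ^ l := h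
    _ = 2 ^ l * (l.factorial : ℝ) := by ring

lemma key_lower {θ : ℝ} (hθ0 : 0 < θ) (hθ4 : θ ≤ π / 4) {n l : ℕ} (hnl : 2 ≤ n + l) :
    2 / π ^ 2 * θ ^ 2 ≤ 1 - Real.sin θ ^ (2 * n + l) * legendreP l (Real.sin θ)
      - Real.cos θ ^ (2 * n + l) * legendreP l (Real.cos θ) := by
  have hπ := Real.pi_pos
  set s := Real.sin θ with hsdef
  set c := Real.cos θ with hcdef
  have hsc : s ^ 2 + c ^ 2 = 1 := Real.sin_sq_add_cos_sq θ
  have hs0 : 0 < s := Real.sin_pos_of_pos_of_lt_pi hθ0 (by linarith)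
  have hc0 : 0 < c := Real.cos_pos_of_mem_Ioo ⟨by linarith, by linarith⟩
  have hslec : s ≤ c := by
    have h1 : s ≤ Real.sin (π / 4) :=
      Real.sin_le_sin_of_le_of_le_pi_div_two (by linarith) (by linarith) hθ4
    have h2 : Real.cos (π / 4) ≤ c :=
      Real.cos_le_cos_of_nonneg_of_le_pi hθ0.le (by linarith) hθ4
    rw [Real.sin_pi_div_four] at h1
    rw [Real.cos_pi_div_four] at h2
    linarith
  have hc2 : c ^ 2 < 1 := by nlinarith
  have hs2 : s ^ 2 < 1 := by nlinarith
  have hc1 : c < 1 := by nlinarith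
  have hs1 : s < 1 := by nlinarith
  have hjordan : 2 / π * θ ≤ s := Real.mul_le_sin hθ0.le (by linarith)
  have hθs : 2 / π ^ 2 * θ ^ 2 ≤ s ^ 2 / 2 := by
    have h := mul_le_mul hjordan hjordan (by positivity) hs0.le
    rw [show 2 / π * θ * (2 / π * θ) = 4 / π ^ 2 * θ ^ 2 by ring,
      show s * s = s ^ 2 by ring] at h
    rw [show 2 / π ^ 2 * θ ^ 2 = (4 / π ^ 2 * θ ^ 2) / 2 by ring]
    linarith
  by_cases hsp : n = 0 ∧ l = 2
  · obtain ⟨hn, hl⟩ := hsp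
    subst hn hl
    rw [legendreP_two, legendreP_two]
    have hid : 1 - s ^ (2 * 0 + 2) * ((3 * s ^ 2 - 1) / 2) - c ^ (2 * 0 + 2) * ((3 * c ^ 2 - 1) / 2)
        = 3 * s ^ 2 * c ^ 2 := by
      have : s ^ 2 = 1 - c ^ 2 := by linarith
      rw [show (2 * 0 + 2 : ℕ) = 2 from rfl, this]
      ring
    rw [hid]
    have hchalf : (1:ℝ) / 2 ≤ c ^ 2 := by nlinarith
    nlinarith [sq_nonneg s]
  · have hm3 : 3 ≤ 2 * n + l := by omega
    have hPs := abs_legendreP_le_one hs2 l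
    have hPc := abs_legendreP_le_one hc2 l
    have hsm : s ^ (2 * n + l) * legendreP l s ≤ s ^ 3 := by
      calc s ^ (2 * n + l) * legendreP l s ≤ s ^ (2 * n + l) * 1 :=
            mul_le_mul_of_nonneg_left (le_of_abs_le hPs) (pow_nonneg hs0.le _)
        _ = s ^ (2 * n + l) := mul_one _
        _ ≤ s ^ 3 := pow_le_pow_of_le_one hs0.le hs1.le hm3
    have hcm : c ^ (2 * n + l) * legendreP l c ≤ c ^ 3 := by
      calc c ^ (2 * n + l) * legendreP l c ≤ c ^ (2 * n + l) * 1 :=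
            mul_le_mul_of_nonneg_left (le_of_abs_le hPc) (pow_nonneg hc0.le _)
        _ = c ^ (2 * n + l) := mul_one _
        _ ≤ c ^ 3 := pow_le_pow_of_le_one hc0.le hc1.le hm3
    have hkey : s ^ 2 / 2 ≤ 1 - s ^ 3 - c ^ 3 := by
      nlinarith [mul_nonneg (sub_nonneg.mpr hc1.le) (sub_nonneg.mpr hslec),
        mul_nonneg (mul_nonneg (sub_nonneg.mpr hc1.le) (sub_nonneg.mpr hslec)) hc0.le,
        mul_nonneg (sub_nonneg.mpr hc1.le) (sub_nonneg.mpr hc1.le)]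
    linarith

/-- λ_{n,l} = 0 if n+l ≤ 1 and λ_{n,l} > 0 if n+l ≥ 2, for the
spectral formula of the linearized Boltzmann operator with nonnegative angular
kernel β supported in [0,π/4] satisfying ∫ β(θ)θ² dθ > 0. -/
theorem stmt_8 (β : ℝ → ℝ) (hβmeas : Measurable β)
    (hβnonneg : ∀ θ ∈ Set.Ioc (0 : ℝ) (π / 4), 0 ≤ β θ)
    (hβpos : 0 < ∫ θ in Set.Ioc (0 : ℝ) (π / 4), β θ * θ ^ 2)
    (hβint : ∀ n l : ℕ, MeasureTheory.IntegrableOn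
      (fun θ : ℝ => β θ * (1 + (if n = 0 ∧ l = 0 then (1 : ℝ) else 0)
        - (Real.sin θ) ^ (2 * n + l) * legendreP l (Real.sin θ)
        - (Real.cos θ) ^ (2 * n + l) * legendreP l (Real.cos θ)))
      (Set.Ioc (0 : ℝ) (π / 4)))
    (lam : ℕ → ℕ → ℝ)
    (hlam : ∀ n l : ℕ, lam n l =
      ∫ θ in Set.Ioc (0 : ℝ) (π / 4),
        β θ * (1 + (if n = 0 ∧ l = 0 then (1 : ℝ) else 0)
          - (Real.sin θ) ^ (2 * n + l) * legendreP l (Real.sin θ)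
          - (Real.cos θ) ^ (2 * n + l) * legendreP l (Real.cos θ))) :
    ∀ n l : ℕ, (n + l ≤ 1 → lam n l = 0) ∧ (2 ≤ n + l → 0 < lam n l) := by
  intro n l
  constructor
  · intro hle
    rw [hlam n l]
    have hzero : (fun θ : ℝ => β θ * (1 + (if n = 0 ∧ l = 0 then (1 : ℝ) else 0)
        - (Real.sin θ) ^ (2 * n + l) * legendreP l (Real.sin θ)
        - (Real.cos θ) ^ (2 * n + l) * legendreP l (Real.cos θ))) = fun _ : ℝ => (0 : ℝ) := by
      funext θ
      have hsc := Real.sin_sq_add_cos_sq θ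
      have hn1 : n ≤ 1 := by omega
      have hl1 : l ≤ 1 := by omega
      interval_cases n <;> interval_cases l <;>
        first
          | omega
          | (simp [legendreP_zero, legendreP_one, pow_two]; done)
          | (simp [legendreP_zero, legendreP_one, pow_two]; right; linear_combination -hsc)
    rw [hzero]
    simp
  · intro h2
    rw [hlam n l]
    have hif : (if n = 0 ∧ l = 0 then (1 : ℝ) else 0) = 0 := by
      rw [if_neg]; rintro ⟨rfl, rfl⟩; omega
    have hInt2 : IntegrableOn (fun θ => β θ * θ ^ 2) (Set.Ioc (0 : ℝ) (π / 4)) := by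
      by_contra hcon
      rw [MeasureTheory.integral_undef hcon] at hβpos
      exact lt_irrefl 0 hβpos
    have hmono : (∫ θ in Set.Ioc (0 : ℝ) (π / 4), 2 / π ^ 2 * (β θ * θ ^ 2))
        ≤ ∫ θ in Set.Ioc (0 : ℝ) (π / 4),
          β θ * (1 + (if n = 0 ∧ l = 0 then (1 : ℝ) else 0)
            - (Real.sin θ) ^ (2 * n + l) * legendreP l (Real.sin θ)
            - (Real.cos θ) ^ (2 * n + l) * legendreP l (Real.cos θ)) := by
      apply setIntegral_mono_on (hInt2.const_mul _) (hβint n l) measurableSet_Ioc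
      intro θ hθ
      have hb := hβnonneg θ hθ
      have hk := key_lower hθ.1 hθ.2 h2
      rw [hif]
      calc 2 / π ^ 2 * (β θ * θ ^ 2) = β θ * (2 / π ^ 2 * θ ^ 2) := by ring
        _ ≤ β θ * (1 - (Real.sin θ) ^ (2 * n + l) * legendreP l (Real.sin θ)
            - (Real.cos θ) ^ (2 * n + l) * legendreP l (Real.cos θ)) :=
          mul_le_mul_of_nonneg_left hk hb
        _ = β θ * (1 + 0 - (Real.sin θ) ^ (2 * n + l) * legendreP l (Real.sin θ)
            - (Real.cos θ) ^ (2 * n + l) * legendreP l (Real.cos θ)) := by ring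
    refine lt_of_lt_of_le ?_ hmono
    rw [MeasureTheory.integral_const_mul]
    have hπ := Real.pi_pos
    positivity
end

section
/- Let s = 2 and suppose λ_n ≍ log(2n + e) (i.e. there exist constants 0 < c ≤ C with c·log(2n+e) ≤ λ_n ≤ C·log(2n+e)). For k > 0 and t ≥ 0, the series ∑_{n≥2} (2n + 3/2 + e)^k · e^{-2tλ_n} / (n (log n)²) converges if 2tc ≥ k, and diverges if 2tC < k. -/
open Real

lemma aux_bertrand : Summable (fun n : ℕ => (((n : ℝ) + 2) * Real.log ((n : ℝ) + 2) ^ 2)⁻¹) := by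
  set f : ℕ → ℝ := fun n => (((n : ℝ) + 2) * Real.log ((n : ℝ) + 2) ^ 2)⁻¹ with hf
  have hone : ∀ n : ℕ, (1 : ℝ) < (n : ℝ) + 2 := by
    intro n; have := Nat.cast_nonneg (α := ℝ) n; linarith
  have hpos : ∀ n : ℕ, 0 < ((n : ℝ) + 2) * Real.log ((n : ℝ) + 2) ^ 2 := by
    intro n
    have hl : 0 < Real.log ((n : ℝ) + 2) := Real.log_pos (hone n)
    positivity
  have h_nonneg : ∀ n, 0 ≤ f n := fun n => inv_nonneg.2 (hpos n).le
  have h_mono : ∀ ⦃m n : ℕ⦄, 0 < m → m ≤ n → f n ≤ f m := by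
    intro m n _ hmn
    have hc : ((m : ℝ) + 2) ≤ (n : ℝ) + 2 := by
      have : (m : ℝ) ≤ n := Nat.cast_le.2 hmn
      linarith
    have hl : Real.log ((m : ℝ) + 2) ≤ Real.log ((n : ℝ) + 2) :=
      Real.log_le_log (by linarith [hone m]) hc
    have hlm : 0 ≤ Real.log ((m : ℝ) + 2) := (Real.log_pos (hone m)).le
    apply inv_anti₀ (hpos m)
    exact mul_le_mul hc (pow_le_pow_left₀ hlm hl 2) (by positivity) (by linarith [hone n])
  rw [← summable_condensed_iff_of_nonneg h_nonneg h_mono]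
  rw [← summable_nat_add_iff 1]
  have hsum : Summable (fun k : ℕ => (Real.log 2)⁻¹ ^ 2 * (((k : ℝ) + 1) ^ 2)⁻¹) := by
    apply Summable.mul_left
    have h0 : Summable (fun n : ℕ => ((n : ℝ) ^ 2)⁻¹) :=
      Real.summable_nat_pow_inv.mpr (by norm_num)
    have := (summable_nat_add_iff 1).mpr h0
    simpa using this
  apply Summable.of_nonneg_of_le _ _ hsum
  · intro k
    have hl : 0 < Real.log (((2 : ℕ) ^ (k + 1) : ℕ) + 2 : ℝ) := by
      apply Real.log_pos; exact hone _
    positivity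
  · intro k
    simp only [f]
    have hcast : (((2 : ℕ) ^ (k + 1) : ℕ) : ℝ) = 2 ^ (k + 1) := by push_cast; ring
    rw [hcast, ← div_eq_mul_inv]
    have h2 : (0 : ℝ) < 2 ^ (k + 1) := by positivity
    have hlog : ((k : ℝ) + 1) * Real.log 2 ≤ Real.log ((2 : ℝ) ^ (k + 1) + 2) := by
      have h1 : Real.log ((2 : ℝ) ^ (k + 1)) ≤ Real.log ((2 : ℝ) ^ (k + 1) + 2) :=
        Real.log_le_log h2 (by linarith)
      rw [Real.log_pow] at h1
      push_cast at h1 ⊢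
      linarith
    have hlogpos : (0 : ℝ) < ((k : ℝ) + 1) * Real.log 2 := by
      have := Real.log_pos (by norm_num : (1:ℝ) < 2)
      positivity
    have hden : 2 ^ (k + 1) * (((k : ℝ) + 1) * Real.log 2) ^ 2 ≤
        ((2 : ℝ) ^ (k + 1) + 2) * Real.log ((2 : ℝ) ^ (k + 1) + 2) ^ 2 :=
      mul_le_mul (by linarith) (pow_le_pow_left₀ hlogpos.le hlog 2) (by positivity)
        (by linarith)
    have hpd : (0 : ℝ) < 2 ^ (k + 1) * (((k : ℝ) + 1) * Real.log 2) ^ 2 := by positivity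
    calc (2 : ℝ) ^ (k + 1) / (((2 : ℝ) ^ (k + 1) + 2) * Real.log ((2 : ℝ) ^ (k + 1) + 2) ^ 2)
        ≤ (2 : ℝ) ^ (k + 1) / (2 ^ (k + 1) * (((k : ℝ) + 1) * Real.log 2) ^ 2) :=
          div_le_div_of_nonneg_left (by positivity) hpd hden
      _ = (Real.log 2)⁻¹ ^ 2 * (((k : ℝ) + 1) ^ 2)⁻¹ := by
          field_simp

/-- delayed Sobolev regularization at s = 2. With
λ_n ≍ log(2n+e), the series ∑_{n≥2} (2n+3/2+e)^k e^{-2tλ_n}/(n (log n)²)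
converges if 2tc ≥ k and diverges if 2tC < k. -/
theorem stmt_11 (lam : ℕ → ℝ) (c C : ℝ) (hc : 0 < c) (hcC : c ≤ C)
    (hlam : ∀ n : ℕ, 2 ≤ n →
      c * Real.log (2 * n + Real.exp 1) ≤ lam n ∧
      lam n ≤ C * Real.log (2 * n + Real.exp 1))
    (k t : ℝ) (hk : 0 < k) (ht : 0 ≤ t) :
    (k ≤ 2 * t * c →
      Summable (fun n : ℕ =>
        (2 * (n + 2 : ℝ) + 3 / 2 + Real.exp 1) ^ k * Real.exp (-2 * t * lam (n + 2))
          / ((n + 2 : ℝ) * (Real.log (n + 2)) ^ 2))) ∧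
    (2 * t * C < k →
      ¬ Summable (fun n : ℕ =>
        (2 * (n + 2 : ℝ) + 3 / 2 + Real.exp 1) ^ k * Real.exp (-2 * t * lam (n + 2))
          / ((n + 2 : ℝ) * (Real.log (n + 2)) ^ 2))) := by
  have he : (0:ℝ) < Real.exp 1 := Real.exp_pos 1
  have hm2 : ∀ n : ℕ, (2:ℝ) ≤ (n:ℝ) + 2 := by
    intro n; have := Nat.cast_nonneg (α := ℝ) n; linarith
  have hlogpos : ∀ n : ℕ, 0 < Real.log ((n:ℝ) + 2) := fun n =>
    Real.log_pos (by linarith [hm2 n])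
  have hdenpos : ∀ n : ℕ, 0 < ((n:ℝ) + 2) * Real.log ((n:ℝ) + 2) ^ 2 := by
    intro n; have := hlogpos n; have := hm2 n; positivity
  constructor
  · -- convergence
    intro hkc
    have hsum := aux_bertrand.mul_left ((2:ℝ)^k)
    apply Summable.of_nonneg_of_le _ _ hsum
    · intro n
      have h1 := hdenpos n
      positivity
    · intro n
      set m : ℝ := (n:ℝ) + 2 with hm
      have hm' := hm2 n
      have hypos : (0:ℝ) < 2*m + Real.exp 1 := by linarith
      have hy1 : (1:ℝ) ≤ 2*m + Real.exp 1 := by linarith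
      obtain ⟨hl1, hl2⟩ := hlam (n+2) (by omega)
      push_cast at hl1 hl2
      have hexp : Real.exp (-2*t*lam (n+2)) ≤ (2*m + Real.exp 1) ^ (-(2*t*c)) := by
        rw [Real.rpow_def_of_pos hypos]
        apply Real.exp_le_exp.mpr
        nlinarith [mul_le_mul_of_nonneg_left hl1 (by linarith : (0:ℝ) ≤ 2*t)]
      have hxk : (2*m + 3/2 + Real.exp 1) ^ k ≤ 2^k * (2*m + Real.exp 1) ^ k := by
        calc (2*m + 3/2 + Real.exp 1) ^ k ≤ (2*(2*m + Real.exp 1)) ^ k :=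
              Real.rpow_le_rpow (by linarith) (by linarith) hk.le
          _ = 2^k * (2*m + Real.exp 1) ^ k :=
              Real.mul_rpow (by norm_num) (by linarith)
      have hnum : (2*m + 3/2 + Real.exp 1) ^ k * Real.exp (-2*t*lam (n+2)) ≤ 2^k := by
        calc (2*m + 3/2 + Real.exp 1) ^ k * Real.exp (-2*t*lam (n+2))
            ≤ (2^k * (2*m + Real.exp 1) ^ k) * (2*m + Real.exp 1) ^ (-(2*t*c)) :=
              mul_le_mul hxk hexp (Real.exp_pos _).le (by positivity)
          _ = 2^k * (2*m + Real.exp 1) ^ (k + -(2*t*c)) := by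
              rw [mul_assoc, ← Real.rpow_add hypos]
          _ ≤ 2^k * 1 := by
              apply mul_le_mul_of_nonneg_left
                (Real.rpow_le_one_of_one_le_of_nonpos hy1 (by linarith)) (by positivity)
          _ = 2^k := mul_one _
      calc (2*m + 3/2 + Real.exp 1) ^ k * Real.exp (-2*t*lam (n+2))
              / (m * Real.log m ^ 2)
          ≤ 2^k / (m * Real.log m ^ 2) :=
            div_le_div_of_nonneg_right hnum (hdenpos n).le
        _ = 2^k * (m * Real.log m ^ 2)⁻¹ := div_eq_mul_inv _ _
  · -- divergence
    intro hkC
    intro hS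
    set ε : ℝ := k - 2*t*C with hε
    have hεpos : 0 < ε := by simp [hε]; linarith
    have key : ∀ n : ℕ, (ε/4)^2 * (((n:ℝ)+2))⁻¹ ≤
        (2 * ((n:ℝ) + 2) + 3 / 2 + Real.exp 1) ^ k * Real.exp (-2 * t * lam (n + 2))
          / (((n:ℝ) + 2) * (Real.log ((n:ℝ) + 2)) ^ 2) := by
      intro n
      set m : ℝ := (n:ℝ) + 2 with hm
      have hm' := hm2 n
      have hmpos : (0:ℝ) < m := by linarith
      have hm1 : (1:ℝ) ≤ m := by linarith
      have hypos : (0:ℝ) < 2*m + Real.exp 1 := by linarith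
      obtain ⟨hl1, hl2⟩ := hlam (n+2) (by omega)
      push_cast at hl1 hl2
      have hexp : (2*m + Real.exp 1) ^ (-(2*t*C)) ≤ Real.exp (-2*t*lam (n+2)) := by
        rw [Real.rpow_def_of_pos hypos]
        apply Real.exp_le_exp.mpr
        nlinarith [mul_le_mul_of_nonneg_left hl2 (by linarith : (0:ℝ) ≤ 2*t)]
      have hnum : m ^ ε ≤ (2*m + 3/2 + Real.exp 1) ^ k * Real.exp (-2*t*lam (n+2)) := by
        calc m ^ ε ≤ (2*m + Real.exp 1) ^ ε :=
              Real.rpow_le_rpow (by linarith) (by linarith) hεpos.le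
          _ = (2*m + Real.exp 1) ^ k * (2*m + Real.exp 1) ^ (-(2*t*C)) := by
              rw [← Real.rpow_add hypos, hε]; ring_nf
          _ ≤ (2*m + 3/2 + Real.exp 1) ^ k * Real.exp (-2*t*lam (n+2)) :=
              mul_le_mul (Real.rpow_le_rpow (by linarith) (by linarith) hk.le) hexp
                (by positivity) (by positivity)
      have hden : m * Real.log m ^ 2 ≤ m * (m ^ (ε/4) / (ε/4)) ^ 2 := by
        apply mul_le_mul_of_nonneg_left _ (by linarith)
        exact pow_le_pow_left₀ (hlogpos n).le
          (Real.log_le_rpow_div (by linarith) (by linarith)) 2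
      have e1 : m * (m ^ (ε/4) / (ε/4)) ^ 2 = m * m ^ (ε/2) / (ε/4)^2 := by
        rw [div_pow, sq (m ^ (ε/4)), ← Real.rpow_add hmpos, mul_div_assoc]
        ring_nf
      have e2 : m * m ^ (ε/2) = m ^ (1 + ε/2) := by
        rw [Real.rpow_add hmpos, Real.rpow_one]
      have e3 : m ^ ε / m ^ (1 + ε/2) = m ^ (ε/2 - 1) := by
        rw [← Real.rpow_sub hmpos]; ring_nf
      have h1 : (ε/4)^2 * m⁻¹ ≤ m ^ ε / (m * (m ^ (ε/4) / (ε/4)) ^ 2) := by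
        calc (ε/4)^2 * m⁻¹ = (ε/4)^2 * m ^ (-1 : ℝ) := by rw [Real.rpow_neg_one]
          _ ≤ (ε/4)^2 * m ^ (ε/2 - 1) :=
              mul_le_mul_of_nonneg_left
                (Real.rpow_le_rpow_of_exponent_le hm1 (by linarith)) (by positivity)
          _ = (ε/4)^2 * (m ^ ε / m ^ (1 + ε/2)) := by rw [e3]
          _ = m ^ ε / (m ^ (1 + ε/2) / (ε/4)^2) := by
              rw [div_div_eq_mul_div]; ring
          _ = m ^ ε / (m * (m ^ (ε/4) / (ε/4)) ^ 2) := by rw [e1, e2]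
      refine h1.trans (div_le_div₀ (by positivity) hnum (hdenpos n) hden)
    have hcomp : Summable (fun n : ℕ => (ε/4)^2 * (((n:ℝ)+2))⁻¹) :=
      Summable.of_nonneg_of_le (fun n => by positivity) key hS
    have hne : ((ε/4)^2 : ℝ) ≠ 0 := by positivity
    have h2 : Summable (fun n : ℕ => (((n:ℝ)+2))⁻¹) := by
      have := hcomp.mul_left (((ε/4)^2)⁻¹)
      simpa [← mul_assoc, inv_mul_cancel₀ hne] using this
    have h3 : Summable (fun n : ℕ => ((n:ℝ))⁻¹) := by
      rw [← summable_nat_add_iff 2]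
      simpa using h2
    exact Real.not_summable_natCast_inv h3
end
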